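/- Let k be a positive integer and C > 0. Then the function α(s) = 2·arctan(C·tan^k s) satisfies, on (0, π/2), the harmonicity ODE α″(s) + (cot s − tan s)·α′(s) − (k²/cos²s + k²/sin²s)·sin α(s)·cos α(s) = 0, together with the boundary conditions lim_{s→0⁺} α(s) = 0 and lim_{s→π/2⁻} α(s) = π. -/

import Mathlib

open Real Set

private lemma pred_pow_mul (m : ℕ) (t : ℝ) (ht : t ≠ 0) :
    (m : ℝ) * t ^ (m - 1) = (m : ℝ) * t ^ m / t := by
  cases m with
  | zero => simp
  | succ n =>
    simp only [Nat.add_sub_cancel, Nat.cast_add, Nat.cast_one, pow_succ]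
    field_simp

/-- For a positive integer `k` and `C > 0`, the function
`α(s) = 2·arctan(C·tanᵏ s)` satisfies the harmonicity ODE
`α'' + (cot s − tan s)·α' − (k²/cos²s + k²/sin²s)·sin α·cos α = 0` on `(0, π/2)` with
boundary limits `α(s) → 0` as `s → 0⁺` and `α(s) → π` as `s → (π/2)⁻`. -/
theorem stmt_9 (k : ℕ) (hk : 0 < k) (C : ℝ) (hC : 0 < C)
    (α : ℝ → ℝ) (hα : α = fun s => 2 * arctan (C * tan s ^ k)) :
    (∀ s ∈ Ioo 0 (π/2),
      deriv (deriv α) s + (cot s - tan s) * deriv α s -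
        ((k : ℝ)^2 / cos s ^ 2 + (k : ℝ)^2 / sin s ^ 2) * sin (α s) * cos (α s) = 0) ∧
    Filter.Tendsto α (nhdsWithin 0 (Ioi 0)) (nhds 0) ∧
    Filter.Tendsto α (nhdsWithin (π/2) (Iio (π/2))) (nhds π) := by
  obtain ⟨m, rfl⟩ := Nat.exists_eq_succ_of_ne_zero hk.ne'
  simp only [Nat.succ_eq_add_one] at hα ⊢
  set F : ℝ → ℝ := fun x =>
    2 * C * (m + 1) * tan x ^ m * (1 + tan x ^ 2) / (1 + (C * tan x ^ (m + 1)) ^ 2) with hF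
  have hDpos : ∀ x : ℝ, (0:ℝ) < 1 + (C * tan x ^ (m + 1)) ^ 2 := fun x => by positivity
  have hder : ∀ x : ℝ, cos x ≠ 0 → HasDerivAt α (F x) x := by
    intro x hx
    have h1 : HasDerivAt (fun s => C * tan s ^ (m + 1))
        (C * ((m + 1 : ℕ) * tan x ^ m * (1 / cos x ^ 2))) x := by
      simpa using (((hasDerivAt_tan hx).pow (m + 1)).const_mul C)
    have h2 := (h1.arctan).const_mul 2
    rw [hα]
    refine h2.congr_deriv ?_
    simp only [hF]
    have hct : (1 : ℝ) / cos x ^ 2 = 1 + tan x ^ 2 := by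
      rw [one_div, ← Real.inv_one_add_tan_sq hx, inv_inv]
    rw [hct]
    push_cast
    ring
  refine ⟨?_, ?_, ?_⟩
  · intro s hs
    obtain ⟨hs1, hs2⟩ := hs
    have hcos : cos s ≠ 0 :=
      (cos_pos_of_mem_Ioo ⟨by linarith [pi_pos], hs2⟩).ne'
    have hsin : sin s ≠ 0 := (sin_pos_of_pos_of_lt_pi hs1 (by linarith [pi_pos])).ne'
    have htan : tan s ≠ 0 := (tan_pos_of_pos_of_lt_pi_div_two hs1 hs2).ne'
    have hopen : IsOpen {x : ℝ | cos x ≠ 0} := isOpen_compl_singleton.preimage continuous_cos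
    have hev : deriv α =ᶠ[nhds s] F := by
      filter_upwards [hopen.mem_nhds hcos] with x hx
      exact (hder x hx).deriv
    have hda : deriv α s = F s := (hder s hcos).deriv
    -- second derivative
    have hT : HasDerivAt (fun x : ℝ => tan x ^ m)
        ((m : ℝ) * tan s ^ (m - 1) * (1 / cos s ^ 2)) s := (hasDerivAt_tan hcos).pow m
    have hP : HasDerivAt (fun x : ℝ => 1 + tan x ^ 2)
        ((2 : ℕ) * tan s ^ 1 * (1 / cos s ^ 2)) s := by
      simpa using ((hasDerivAt_tan hcos).pow 2).const_add 1
    have hU : HasDerivAt (fun x : ℝ => 1 + (C * tan x ^ (m + 1)) ^ 2)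
        ((2 : ℕ) * (C * tan s ^ (m + 1)) ^ 1 *
          (C * ((m + 1 : ℕ) * tan s ^ m * (1 / cos s ^ 2)))) s := by
      have h1 : HasDerivAt (fun x => C * tan x ^ (m + 1))
          (C * ((m + 1 : ℕ) * tan s ^ m * (1 / cos s ^ 2))) s := by
        simpa using (((hasDerivAt_tan hcos).pow (m + 1)).const_mul C)
      simpa using (h1.pow 2).const_add 1
    have hN : HasDerivAt (fun x : ℝ => 2 * C * (m + 1) * tan x ^ m * (1 + tan x ^ 2))
        ((2 * C * ((m : ℝ) + 1) * ((m : ℝ) * tan s ^ (m - 1) * (1 / cos s ^ 2))) * (1 + tan s ^ 2)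
          + 2 * C * ((m : ℝ) + 1) * tan s ^ m * ((2 : ℕ) * tan s ^ 1 * (1 / cos s ^ 2))) s := by
      have h2 := ((hT.const_mul (2 * C * ((m : ℝ) + 1))).mul hP)
      exact h2.congr_deriv (by ring)
    have hd2 := hN.div hU (hDpos s).ne'
    have hdd : deriv (deriv α) s = deriv F s := hev.deriv_eq
    -- trig rewrites
    have hct : (1 : ℝ) / cos s ^ 2 = 1 + tan s ^ 2 := by
      rw [one_div, ← Real.inv_one_add_tan_sq hcos, inv_inv]
    have hcos2 : cos s ^ 2 = (1 + tan s ^ 2)⁻¹ := (Real.inv_one_add_tan_sq hcos).symm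
    have hsin2 : sin s ^ 2 = tan s ^ 2 * (1 + tan s ^ 2)⁻¹ := by
      rw [← hcos2, tan_eq_sin_div_cos]
      field_simp
    have hcot : cot s = 1 / tan s := by
      rw [Real.cot_eq_cos_div_sin, Real.tan_eq_sin_div_cos, one_div_div]
    have hP1 : (0:ℝ) < 1 + tan s ^ 2 := by positivity
    have husq : Real.sqrt (1 + (C * tan s ^ (m + 1)) ^ 2) *
        Real.sqrt (1 + (C * tan s ^ (m + 1)) ^ 2) = 1 + (C * tan s ^ (m + 1)) ^ 2 :=
      Real.mul_self_sqrt (by positivity)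
    have hαs : α s = 2 * arctan (C * tan s ^ (m + 1)) := by rw [hα]
    have hsa : sin (α s) = 2 * (C * tan s ^ (m + 1)) / (1 + (C * tan s ^ (m + 1)) ^ 2) := by
      rw [hαs, sin_two_mul, sin_arctan, cos_arctan, mul_assoc, div_mul_div_comm, mul_one, husq,
        ← mul_div_assoc]
    have hca : cos (α s) = (1 - (C * tan s ^ (m + 1)) ^ 2) / (1 + (C * tan s ^ (m + 1)) ^ 2) := by
      rw [hαs, cos_two_mul, cos_arctan, div_pow, one_pow,
        sq_sqrt (by positivity : (0:ℝ) ≤ 1 + (C * tan s ^ (m + 1)) ^ 2)]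
      field_simp
      ring
    rw [hdd, show deriv F s = _ from hd2.deriv, hda, hsa, hca]
    simp only [hF]
    have e2 : (1:ℝ)/sin s^2 = (1 + tan s ^2)/tan s ^2 := by
      have h1 := sin_sq_add_cos_sq s
      rw [tan_eq_sin_div_cos]
      field_simp
      linarith
    push_cast
    rw [hcot, pred_pow_mul m (tan s) htan,
      div_eq_mul_one_div (((m:ℝ)+1)^2) (cos s ^2), div_eq_mul_one_div (((m:ℝ)+1)^2) (sin s ^2),
      hct, e2]
    simp only [pow_succ (tan s) m]
    set t := tan s with ht'
    set T := t ^ m with hT'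
    clear hd2 hN hU hT hP hda hev hder hsa hca hαs husq hct hcos2 hsin2 hcot hDpos hopen hk hα
    clear hdd hF F hcos hsin hs1 hs2
    clear_value t T
    clear hT' ht' e2 α s
    have h2ne : (1 + (C * (T * t)) ^ 2) ≠ 0 := by positivity
    have h1ne : (1 + t ^ 2) ≠ 0 := by positivity
    set_option maxHeartbeats 2000000 in
    field_simp [htan, h1ne, h2ne]
    set_option maxHeartbeats 2000000 in
    ring
  · have hc : ContinuousAt α 0 := by
      rw [hα]
      have ht0 : ContinuousAt tan 0 := Real.continuousAt_tan.2 (by simp)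
      exact continuousAt_const.mul
        (Real.continuous_arctan.continuousAt.comp ((ht0.pow (m+1)).const_mul C))
    have h0 : α 0 = 0 := by rw [hα]; simp
    exact (h0 ▸ hc.tendsto).mono_left nhdsWithin_le_nhds
  · have h1 : Filter.Tendsto (fun s => C * tan s ^ (m + 1))
        (nhdsWithin (π/2) (Iio (π/2))) Filter.atTop :=
      (Filter.Tendsto.const_mul_atTop hC
        ((Filter.tendsto_pow_atTop (Nat.succ_ne_zero m)).comp tendsto_tan_pi_div_two))
    have h2 : Filter.Tendsto (fun s => arctan (C * tan s ^ (m + 1)))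
        (nhdsWithin (π/2) (Iio (π/2))) (nhds (π/2)) :=
      (tendsto_arctan_atTop.mono_right nhdsWithin_le_nhds).comp h1
    have h3 := h2.const_mul 2
    rw [hα]
    have h4 : (2:ℝ) * (π/2) = π := by ring
    simpa [h4] using h3
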